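/- The constants K_0, …, K_{m_p} satisfy the three families of identities: (i) ∑_{j=1}^{m_p+1} K_{j−1} = b* − c; (ii) ∑_{j=1}^{m_p+1} r_{j−1}·K_{j−1} = 1; and (iii) for every k ∈ {1, …, m_p}, ∑_{j=1}^{m_p+1} β_k^p·K_{j−1}/(β_k^p − r_{j−1}) = b* − c + 1/β_k^p. -/

import Mathlib

open Finset Matrix MeasureTheory

set_option maxHeartbeats 1000000

section Aux
set_option linter.unusedSectionVars false
open Polynomial
variable {ι : Type*} [DecidableEq ι]

lemma coeff_card_lt_prod (s : Finset ι) (a : ι → ℝ) {n : ℕ} (hn : #s < n) :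
    (∏ k ∈ s, (X - C (a k))).coeff n = 0 := by
  apply Polynomial.coeff_eq_zero_of_natDegree_lt
  calc (∏ k ∈ s, (X - C (a k))).natDegree ≤ ∑ k ∈ s, (X - C (a k)).natDegree :=
        Polynomial.natDegree_prod_le _ _
    _ = #s := by simp [natDegree_X_sub_C]
    _ < n := hn

lemma coeff_card_prod (s : Finset ι) (a : ι → ℝ) :
    (∏ k ∈ s, (X - C (a k))).coeff #s = 1 := by
  classical
  induction s using Finset.induction_on with
  | empty => simp
  | insert x s ha ih =>
    rw [Finset.prod_insert ha, Finset.card_insert_of_notMem ha]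
    rw [sub_mul, Polynomial.coeff_sub, Polynomial.coeff_X_mul, ih,
      Polynomial.coeff_C_mul, coeff_card_lt_prod s a (Nat.lt_succ_self _)]
    ring

lemma coeff_zero_prod' (s : Finset ι) (a : ι → ℝ) :
    (∏ k ∈ s, (X - C (a k))).coeff 0 = ∏ k ∈ s, (-(a k)) := by
  rw [Polynomial.coeff_zero_eq_eval_zero, Polynomial.eval_prod]
  simp

lemma prod_neg' (s : Finset ι) (f : ι → ℝ) :
    ∏ k ∈ s, (-(f k)) = (-1 : ℝ)^(#s) * ∏ k ∈ s, f k := by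
  rw [← Finset.prod_const (-1 : ℝ), ← Finset.prod_mul_distrib]
  exact Finset.prod_congr rfl (fun k _ => (neg_one_mul _).symm)

lemma coeff_one_prod (s : Finset ι) (a : ι → ℝ) :
    (∏ k ∈ s, (X - C (a k))).coeff 1 = ∑ l ∈ s, ∏ k ∈ s.erase l, (-(a k)) := by
  classical
  induction s using Finset.induction_on with
  | empty => simp [Polynomial.coeff_one]
  | insert x s ha ih =>
    rw [Finset.prod_insert ha, Finset.sum_insert ha, Finset.erase_insert ha]
    have hre : ∀ l ∈ s, ∏ k ∈ (insert x s).erase l, (-(a k))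
        = (-(a x)) * ∏ k ∈ s.erase l, (-(a k)) := by
      intro l hl
      rw [Finset.erase_insert_of_ne (by rintro rfl; exact ha hl), Finset.prod_insert
        (fun h => ha (Finset.mem_of_mem_erase h))]
    rw [sub_mul, Polynomial.coeff_sub, Polynomial.coeff_X_mul, coeff_zero_prod',
      Polynomial.coeff_C_mul, ih, Finset.mul_sum, Finset.sum_congr rfl hre]
    simp [sub_eq_add_neg, ← Finset.sum_neg_distrib, neg_mul]

end Aux

/-- The (i,j) cofactor of a square matrix: (−1)^(i+j) times the determinant of the
submatrix obtained by deleting row `i` and column `j`. -/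
noncomputable def cof {n : ℕ} (M : Matrix (Fin (n + 1)) (Fin (n + 1)) ℝ)
    (i j : Fin (n + 1)) : ℝ :=
  (-1 : ℝ) ^ ((i : ℕ) + (j : ℕ)) * (M.submatrix i.succAbove j.succAbove).det

theorem stmt6 (σ μ ρ lamn lamp c : ℝ)
    (hσ : 0 < σ) (hρ : 0 < ρ) (hlamn : 0 < lamn) (hlamp : 0 < lamp) (hc : 0 < c)
    (mp mn : ℕ) (hmp : 1 ≤ mp) (hmn : 1 ≤ mn)
    (ωp βp ωn βn : ℕ → ℝ)
    (hωp : ∀ k, 1 ≤ k → k ≤ mp → 0 < ωp k)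
    (hωpsum : ∑ k ∈ Finset.Icc 1 mp, ωp k = 1)
    (hβp1 : 0 < βp 1)
    (hβpmono : ∀ k, 1 ≤ k → k < mp → βp k < βp (k + 1))
    (hωn : ∀ k, 1 ≤ k → k ≤ mn → 0 < ωn k)
    (hωnsum : ∑ k ∈ Finset.Icc 1 mn, ωn k = 1)
    (hβn1 : 0 < βn 1)
    (hβnmono : ∀ k, 1 ≤ k → k < mn → βn k < βn (k + 1))
    (r : ℕ → ℝ)
    (hroot : ∀ j, j ≤ mp →
      σ ^ 2 * (r j) ^ 2 / 2 + μ * r j - (ρ + lamn + lamp)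
        + lamp * ∑ i ∈ Finset.Icc 1 mp, ωp i * βp i / (βp i - r j)
        + lamn * ∑ i ∈ Finset.Icc 1 mn, ωn i * βn i / (r j + βn i) = 0)
    (hr0 : 0 < r 0)
    (hinter : ∀ k, 1 ≤ k → k ≤ mp → r (k - 1) < βp k ∧ βp k < r k)
    (A : Matrix (Fin (mp + 1)) (Fin (mp + 1)) ℝ)
    (hA : ∀ i j : Fin (mp + 1), A i j = if (i : ℕ) = 0 then 1 else βp i / (βp i - r j))
    (hdet : A.det ≠ 0)
    (R : ℝ)
    (hR : R = (∏ k ∈ Finset.range (mp + 1), r k) / ∏ k ∈ Finset.Icc 1 mp, βp k)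
    (K : ℕ → ℝ)
    (hK : ∀ j : Fin (mp + 1), K j = R * cof A 0 j / ((r j) ^ 2 * A.det))
    (b : ℝ)
    (hb : b = c + (∑ i ∈ Finset.range (mp + 1), 1 / r i) - ∑ i ∈ Finset.Icc 1 mp, 1 / βp i)
    :
    (∑ j ∈ Finset.range (mp + 1), K j = b - c) ∧
    (∑ j ∈ Finset.range (mp + 1), r j * K j = 1) ∧
    (∀ k, 1 ≤ k → k ≤ mp →
      ∑ j ∈ Finset.range (mp + 1), βp k * K j / (βp k - r j) = b - c + 1 / βp k) := by
  classical
  -- basic order facts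
  have hstep : ∀ k, 1 ≤ k → k ≤ mp → r (k-1) < r k :=
    fun k h1 h2 => lt_trans (hinter k h1 h2).1 (hinter k h1 h2).2
  have hmono : ∀ j, j ≤ mp → ∀ i, i < j → r i < r j := by
    intro j
    induction j with
    | zero => intro _ i hi; exact absurd hi (Nat.not_lt_zero i)
    | succ n ih =>
      intro hj i hi
      have h1 : r n < r (n+1) := by
        have := hstep (n+1) (by omega) hj; simpa using this
      rcases Nat.lt_succ_iff_lt_or_eq.mp hi with h | h
      · exact lt_trans (ih (by omega) i h) h1
      · subst h; exact h1
  have hrpos : ∀ j, j ≤ mp → 0 < r j := by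
    intro j hj
    rcases Nat.eq_zero_or_pos j with h | h
    · subst h; exact hr0
    · exact lt_trans hr0 (hmono j hj 0 h)
  have hrne : ∀ j, j ≤ mp → r j ≠ 0 := fun j hj => ne_of_gt (hrpos j hj)
  have hβpos : ∀ k, 1 ≤ k → k ≤ mp → 0 < βp k :=
    fun k h1 h2 => lt_trans (hrpos (k-1) (by omega)) (hinter k h1 h2).1
  have hβrne : ∀ k, 1 ≤ k → k ≤ mp → ∀ j, j ≤ mp → βp k - r j ≠ 0 := by
    intro k h1 h2 j hj
    rcases lt_or_ge j k with h | h
    · have hle : r j ≤ r (k-1) := by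
        rcases Nat.lt_or_ge j (k-1) with hh | hh
        · exact le_of_lt (hmono (k-1) (by omega) j hh)
        · have : j = k-1 := by omega
          rw [this]
      exact ne_of_gt (sub_pos.mpr (lt_of_le_of_lt hle (hinter k h1 h2).1))
    · have hle : r k ≤ r j := by
        rcases Nat.lt_or_ge k j with hh | hh
        · exact le_of_lt (hmono j hj k hh)
        · have : j = k := by omega
          rw [this]
      have : βp k < r j := lt_of_lt_of_le (hinter k h1 h2).2 hle
      exact ne_of_lt (by linarith)
  have hjle : ∀ j : Fin (mp+1), (j:ℕ) ≤ mp := fun j => Nat.lt_succ_iff.mp j.isLt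
  have hrinj : ∀ i j : Fin (mp+1), r (i:ℕ) = r (j:ℕ) → i = j := by
    intro i j h
    by_contra hne
    rcases lt_or_gt_of_ne hne with hh | hh
    · exact absurd h (ne_of_lt (hmono j (hjle j) i hh))
    · exact absurd h.symm (ne_of_lt (hmono i (hjle i) j hh))
  have hrdiff : ∀ (j : Fin (mp+1)), ∀ k ∈ Finset.univ.erase j, r (j:ℕ) - r (k:ℕ) ≠ 0 := by
    intro j k hk
    have hne : k ≠ j := (Finset.mem_erase.mp hk).1
    exact sub_ne_zero.mpr (fun h => hne (hrinj k j h.symm))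
  -- key quantities
  set Qr : ℝ := ∏ j : Fin (mp+1), r (j:ℕ) with hQr
  set Qb : ℝ := ∏ i ∈ Finset.Icc 1 mp, βp i with hQb
  have hQrne : Qr ≠ 0 := Finset.prod_ne_zero_iff.mpr (fun j _ => hrne j (hjle j))
  have hQbne : Qb ≠ 0 := Finset.prod_ne_zero_iff.mpr
    (fun i hi => ne_of_gt (hβpos i (Finset.mem_Icc.mp hi).1 (Finset.mem_Icc.mp hi).2))
  set T : ℝ := ∑ j : Fin (mp+1), (r (j:ℕ))⁻¹ with hT
  set Tb : ℝ := ∑ i ∈ Finset.Icc 1 mp, (βp i)⁻¹ with hTb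
  set vv : Fin (mp+1) → ℝ := fun j =>
    (∏ i ∈ Finset.Icc 1 mp, (r (j:ℕ) - βp i)) *
      (∏ k ∈ Finset.univ.erase j, (r (j:ℕ) - r (k:ℕ)))⁻¹ with hvv
  -- the Lagrange interpolation identity
  have hL : (∑ j : Fin (mp+1), Polynomial.C (vv j) *
        ∏ k ∈ Finset.univ.erase j, (Polynomial.X - Polynomial.C (r (k:ℕ))))
      = ∏ i ∈ Finset.Icc 1 mp, (Polynomial.X - Polynomial.C (βp i)) := by
    set P : Polynomial ℝ := ∏ i ∈ Finset.Icc 1 mp, (Polynomial.X - Polynomial.C (βp i)) with hPdef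
    have hinjOn : Set.InjOn (fun j : Fin (mp+1) => r (j:ℕ)) (Finset.univ : Finset (Fin (mp+1))) :=
      fun i _ j _ h => hrinj i j h
    have hdegP : P.degree < ((Finset.univ : Finset (Fin (mp+1))).card : WithBot ℕ) := by
      rw [hPdef, Polynomial.degree_prod]
      simp only [Polynomial.degree_X_sub_C, Finset.sum_const, Nat.card_Icc, Finset.card_univ,
        Fintype.card_fin, nsmul_eq_mul, mul_one]
      norm_cast
      omega
    have hinterp := Lagrange.eq_interpolate (v := fun j : Fin (mp+1) => r (j:ℕ)) (f := P)
      hinjOn hdegP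
    rw [Lagrange.interpolate_apply] at hinterp
    rw [hinterp]
    apply Finset.sum_congr rfl
    intro j _
    have hbasis : Lagrange.basis Finset.univ (fun j : Fin (mp+1) => r (j:ℕ)) j
        = Polynomial.C ((∏ k ∈ Finset.univ.erase j, (r (j:ℕ) - r (k:ℕ)))⁻¹) *
          ∏ k ∈ Finset.univ.erase j, (Polynomial.X - Polynomial.C (r (k:ℕ))) := by
      rw [Lagrange.basis]
      simp only [Lagrange.basisDivisor]
      rw [Finset.prod_mul_distrib, ← map_prod, Finset.prod_inv_distrib]
    have hevalP : Polynomial.eval (r (j:ℕ)) P = ∏ i ∈ Finset.Icc 1 mp, (r (j:ℕ) - βp i) := by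
      rw [hPdef, Polynomial.eval_prod]
      simp
    rw [hbasis, hevalP, hvv, ← mul_assoc, ← Polynomial.C_mul]
  -- consequences of the interpolation identity
  have hcard : ∀ j : Fin (mp+1), #(Finset.univ.erase j) = mp := by
    intro j
    rw [Finset.card_erase_of_mem (Finset.mem_univ j), Finset.card_univ, Fintype.card_fin]
    omega
  have hEa : ∑ j : Fin (mp+1), vv j = 1 := by
    have h := congrArg (fun q : Polynomial ℝ => q.coeff mp) hL
    simp only [Polynomial.finset_sum_coeff, Polynomial.coeff_C_mul] at h
    have h1 : ∀ j : Fin (mp+1),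
        (∏ k ∈ Finset.univ.erase j, (Polynomial.X - Polynomial.C (r (k:ℕ)))).coeff mp = 1 := by
      intro j
      have := coeff_card_prod (Finset.univ.erase j) (fun k : Fin (mp+1) => r (k:ℕ))
      rwa [hcard j] at this
    have h2 : (∏ i ∈ Finset.Icc 1 mp, (Polynomial.X - Polynomial.C (βp i))).coeff mp = 1 := by
      have := coeff_card_prod (Finset.Icc 1 mp) βp
      rw [Nat.card_Icc] at this
      simpa using this
    simp only [h1, h2, mul_one] at h
    exact h
  have hEb : ∀ k, 1 ≤ k → k ≤ mp →
      ∑ j : Fin (mp+1), vv j * (βp k - r (j:ℕ))⁻¹ = 0 := by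
    intro k hk1 hk2
    have h := congrArg (Polynomial.eval (βp k)) hL
    simp only [Polynomial.eval_finset_sum, Polynomial.eval_mul, Polynomial.eval_C,
      Polynomial.eval_prod, Polynomial.eval_sub, Polynomial.eval_X] at h
    have hz : ∏ i ∈ Finset.Icc 1 mp, (βp k - βp i) = 0 :=
      Finset.prod_eq_zero (Finset.mem_Icc.mpr ⟨hk1, hk2⟩) (sub_self _)
    rw [hz] at h
    have key : ∀ j : Fin (mp+1), vv j * (βp k - r (j:ℕ))⁻¹
        = (∏ k' : Fin (mp+1), (βp k - r (k':ℕ)))⁻¹ *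
          (vv j * ∏ k' ∈ Finset.univ.erase j, (βp k - r (k':ℕ))) := by
      intro j
      have hful : ∏ k' ∈ Finset.univ.erase j, (βp k - r (k':ℕ))
          = (∏ k' : Fin (mp+1), (βp k - r (k':ℕ))) * (βp k - r (j:ℕ))⁻¹ := by
        rw [← Finset.prod_erase_mul Finset.univ _ (Finset.mem_univ j)]
        exact (mul_inv_cancel_right₀ (hβrne k hk1 hk2 j (hjle j)) _).symm
      have hfne : (∏ k' : Fin (mp+1), (βp k - r (k':ℕ))) ≠ 0 :=
        Finset.prod_ne_zero_iff.mpr fun j' _ => hβrne k hk1 hk2 j' (hjle j')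
      rw [hful]
      field_simp
    rw [Finset.sum_congr rfl (fun j _ => key j), ← Finset.mul_sum, h, mul_zero]
  have hpow : ((-1:ℝ))^mp ≠ 0 := pow_ne_zero _ (by norm_num)
  have hrprod : ∀ j : Fin (mp+1), ∏ k ∈ Finset.univ.erase j, r (k:ℕ) = Qr * (r (j:ℕ))⁻¹ := by
    intro j
    rw [hQr, ← Finset.prod_erase_mul Finset.univ _ (Finset.mem_univ j)]
    exact (mul_inv_cancel_right₀ (hrne j (hjle j)) _).symm
  have hcardIcc : #(Finset.Icc 1 mp) = mp := by rw [Nat.card_Icc]; omega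
  have hEc : ∑ j : Fin (mp+1), vv j * (r (j:ℕ))⁻¹ = Qb / Qr := by
    have h := congrArg (Polynomial.eval 0) hL
    simp only [Polynomial.eval_finset_sum, Polynomial.eval_mul, Polynomial.eval_C,
      Polynomial.eval_prod, Polynomial.eval_sub, Polynomial.eval_X, zero_sub] at h
    have key : ∀ j : Fin (mp+1), vv j * ∏ k ∈ Finset.univ.erase j, (-(r (k:ℕ)))
        = (-1:ℝ)^mp * (Qr * (vv j * (r (j:ℕ))⁻¹)) := by
      intro j
      rw [prod_neg', hcard j, hrprod j]
      ring
    have hrhs : ∏ i ∈ Finset.Icc 1 mp, (-(βp i)) = (-1:ℝ)^mp * Qb := by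
      rw [prod_neg', hcardIcc, hQb]
    rw [Finset.sum_congr rfl (fun j _ => key j), ← Finset.mul_sum, hrhs] at h
    have h2 : Qr * ∑ j : Fin (mp+1), vv j * (r (j:ℕ))⁻¹ = Qb := by
      have := mul_left_cancel₀ hpow h
      rwa [← Finset.mul_sum] at this
    rw [eq_div_iff hQrne]
    linear_combination h2
  have hEd : ∑ j : Fin (mp+1), vv j * ((r (j:ℕ))^2)⁻¹ = Qb / Qr * (T - Tb) := by
    have h := congrArg (fun q : Polynomial ℝ => q.coeff 1) hL
    simp only [Polynomial.finset_sum_coeff, Polynomial.coeff_C_mul, coeff_one_prod] at h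
    set Pn : ℝ := ∏ k : Fin (mp+1), (-(r (k:ℕ))) with hPn
    have hPnval : Pn = (-1:ℝ)^(mp+1) * Qr := by
      rw [hPn, prod_neg', Finset.card_univ, Fintype.card_fin, hQr]
    have key : ∀ j : Fin (mp+1),
        vv j * ∑ l ∈ Finset.univ.erase j, ∏ k ∈ (Finset.univ.erase j).erase l, (-(r (k:ℕ)))
        = Pn * (vv j * (r (j:ℕ))⁻¹ * T - vv j * ((r (j:ℕ))^2)⁻¹) := by
      intro j
      have hin : ∀ l ∈ Finset.univ.erase j, ∏ k ∈ (Finset.univ.erase j).erase l, (-(r (k:ℕ)))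
          = Pn * ((r (j:ℕ))⁻¹ * (r (l:ℕ))⁻¹) := by
        intro l hl
        have h1 : (∏ k ∈ (Finset.univ.erase j).erase l, (-(r (k:ℕ)))) * (-(r (l:ℕ)))
            = ∏ k ∈ Finset.univ.erase j, (-(r (k:ℕ))) :=
          Finset.prod_erase_mul _ _ hl
        have h2 : (∏ k ∈ Finset.univ.erase j, (-(r (k:ℕ)))) * (-(r (j:ℕ))) = Pn :=
          Finset.prod_erase_mul _ _ (Finset.mem_univ j)
        have hjne := hrne j (hjle j)
        have hlne := hrne l (hjle l)
        have h3 : Pn = (∏ k ∈ (Finset.univ.erase j).erase l, (-(r (k:ℕ)))) * (r (l:ℕ) * r (j:ℕ)) := by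
          rw [← h2, ← h1]; ring
        rw [h3]
        field_simp
      rw [Finset.sum_congr rfl hin, ← Finset.mul_sum]
      have hsum : ∑ l ∈ Finset.univ.erase j, ((r (j:ℕ))⁻¹ * (r (l:ℕ))⁻¹)
          = (r (j:ℕ))⁻¹ * (T - (r (j:ℕ))⁻¹) := by
        rw [← Finset.mul_sum]
        have := Finset.sum_erase_add Finset.univ (fun l : Fin (mp+1) => (r (l:ℕ))⁻¹)
          (Finset.mem_univ j)
        rw [hT]
        have h3 : ∑ l ∈ Finset.univ.erase j, (r (l:ℕ))⁻¹
            = (∑ l : Fin (mp+1), (r (l:ℕ))⁻¹) - (r (j:ℕ))⁻¹ := by linarith [this]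
        rw [h3]
      rw [hsum]
      have hsq : ((r (j:ℕ))^2)⁻¹ = (r (j:ℕ))⁻¹ * (r (j:ℕ))⁻¹ := by
        rw [sq, mul_inv]
      rw [hsq]
      ring
    have hrhs : ∀ i ∈ Finset.Icc 1 mp, ∏ k ∈ (Finset.Icc 1 mp).erase i, (-(βp k))
        = -((-1:ℝ)^mp * Qb * (βp i)⁻¹) := by
      intro i hi
      have h1 : (∏ k ∈ (Finset.Icc 1 mp).erase i, (-(βp k))) * (-(βp i))
          = ∏ k ∈ Finset.Icc 1 mp, (-(βp k)) := Finset.prod_erase_mul _ _ hi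
      have h2 : ∏ k ∈ Finset.Icc 1 mp, (-(βp k)) = (-1:ℝ)^mp * Qb := by
        rw [prod_neg', hcardIcc, hQb]
      have hbne : βp i ≠ 0 :=
        ne_of_gt (hβpos i (Finset.mem_Icc.mp hi).1 (Finset.mem_Icc.mp hi).2)
      have h3 : (-1:ℝ)^mp * Qb = (∏ k ∈ (Finset.Icc 1 mp).erase i, (-(βp k))) * (-(βp i)) :=
        (h1.trans h2).symm
      rw [h3]
      field_simp
    rw [Finset.sum_congr rfl (fun j _ => key j), ← Finset.mul_sum] at h
    rw [Finset.sum_congr rfl hrhs] at h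
    -- h : Pn * ∑ ... = ∑ i, -((-1)^mp * Qb * (βp i)⁻¹)
    have hrhs2 : ∑ i ∈ Finset.Icc 1 mp, -((-1:ℝ)^mp * Qb * (βp i)⁻¹)
        = -((-1:ℝ)^mp * Qb * Tb) := by
      rw [hTb]
      simp [Finset.mul_sum, Finset.sum_neg_distrib]
    rw [hrhs2, hPnval] at h
    have hsplit : ∑ j : Fin (mp+1), (vv j * (r (j:ℕ))⁻¹ * T - vv j * ((r (j:ℕ))^2)⁻¹)
        = (∑ j : Fin (mp+1), vv j * (r (j:ℕ))⁻¹) * T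
          - ∑ j : Fin (mp+1), vv j * ((r (j:ℕ))^2)⁻¹ := by
      rw [Finset.sum_sub_distrib, ← Finset.sum_mul]
    rw [hsplit] at h
    have h5 : ((-1:ℝ)^mp) * (Qr * ((∑ j : Fin (mp+1), vv j * (r (j:ℕ))⁻¹) * T
          - ∑ j : Fin (mp+1), vv j * ((r (j:ℕ))^2)⁻¹))
        = ((-1:ℝ)^mp) * (Qb * Tb) := by
      rw [pow_succ] at h
      linear_combination -h
    have h4 := mul_left_cancel₀ hpow h5
    have hQrS1 : Qr * (∑ j : Fin (mp+1), vv j * (r (j:ℕ))⁻¹) = Qb := by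
      rw [hEc]
      field_simp
    rw [div_mul_eq_mul_div, eq_div_iff hQrne]
    linear_combination T * hQrS1 - h4
  -- cofactor identities
  have hcof : ∀ w : Fin (mp+1) → ℝ,
      ∑ j : Fin (mp+1), w j * cof A 0 j = (A.updateRow 0 w).det := by
    intro w
    rw [Matrix.det_succ_row_zero]
    apply Finset.sum_congr rfl
    intro j _
    have hsub : (A.updateRow 0 w).submatrix Fin.succ j.succAbove
        = A.submatrix Fin.succ j.succAbove := by
      ext i' j'
      simp [Matrix.updateRow_ne (Fin.succ_ne_zero i')]
    rw [hsub]
    simp only [cof, Matrix.updateRow_self, Fin.val_zero, zero_add, Fin.succAbove_zero]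
    ring
  have hveq : ∀ j : Fin (mp+1), cof A 0 j / A.det = vv j := by
    have hrowsum : ∀ i : Fin (mp+1),
        ∑ j : Fin (mp+1), A i j * cof A 0 j = if i = 0 then A.det else 0 := by
      intro i
      rw [hcof (A i)]
      by_cases hi : i = 0
      · subst hi; rw [Matrix.updateRow_eq_self, if_pos rfl]
      · rw [if_neg hi]; exact Matrix.det_updateRow_eq_zero hi
    have huval : ∀ i : Fin (mp+1),
        ∑ j : Fin (mp+1), A i j * vv j = if i = 0 then 1 else 0 := by
      intro i
      by_cases hi : i = 0
      · subst hi
        rw [if_pos rfl]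
        have h1 : ∀ j : Fin (mp+1), A 0 j * vv j = vv j := by
          intro j; rw [hA]; simp
        rw [Finset.sum_congr rfl (fun j _ => h1 j), hEa]
      · rw [if_neg hi]
        have h0 : (i:ℕ) ≠ 0 := by intro h; apply hi; ext; simp [h]
        have hi1 : 1 ≤ (i:ℕ) := by omega
        have key : ∀ j : Fin (mp+1), A i j * vv j
            = βp i * (vv j * (βp i - r (j:ℕ))⁻¹) := by
          intro j; rw [hA, if_neg h0, div_eq_mul_inv]; ring
        rw [Finset.sum_congr rfl (fun j _ => key j), ← Finset.mul_sum,
          hEb i hi1 (hjle i), mul_zero]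
    have hmv : A.mulVec (fun j => cof A 0 j / A.det) = A.mulVec vv := by
      funext i
      simp only [Matrix.mulVec, dotProduct]
      have l1 : ∑ j : Fin (mp+1), A i j * (cof A 0 j / A.det)
          = if i = 0 then 1 else 0 := by
        have hh : ∀ j : Fin (mp+1), A i j * (cof A 0 j / A.det)
            = (A i j * cof A 0 j) * (A.det)⁻¹ := fun j => by rw [div_eq_mul_inv]; ring
        rw [Finset.sum_congr rfl (fun j _ => hh j), ← Finset.sum_mul, hrowsum i]
        split_ifs with hcase
        · field_simp
        · exact zero_mul _
      rw [l1, huval i]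
    have hinvA : IsUnit A.det := isUnit_iff_ne_zero.mpr hdet
    have hfin := congrArg (fun x => A⁻¹.mulVec x) hmv
    simp only [Matrix.mulVec_mulVec, Matrix.nonsing_inv_mul A hinvA,
      Matrix.one_mulVec] at hfin
    exact fun j => congrFun hfin j
  have hKj : ∀ j : Fin (mp+1), K (j:ℕ) = R * vv j * ((r (j:ℕ))^2)⁻¹ := by
    intro j
    rw [hK j, ← hveq j]
    field_simp
  have hRQ : R = Qr / Qb := by
    rw [hR, hQr, hQb, Fin.prod_univ_eq_prod_range (fun k => r k) (mp+1)]
  -- final assembly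
  have goal2 : ∑ j ∈ Finset.range (mp + 1), r j * K j = 1 := by
    rw [← Fin.sum_univ_eq_sum_range (fun j => r j * K j) (mp+1)]
    have : ∀ j : Fin (mp+1), r (j:ℕ) * K (j:ℕ) = R * (vv j * (r (j:ℕ))⁻¹) := by
      intro j
      rw [hKj j]
      have h := hrne j (hjle j)
      field_simp
    rw [Finset.sum_congr rfl (fun j _ => this j), ← Finset.mul_sum, hEc, hRQ]
    field_simp
  have goal1 : ∑ j ∈ Finset.range (mp + 1), K j = b - c := by
    rw [← Fin.sum_univ_eq_sum_range (fun j => K j) (mp+1)]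
    have : ∀ j : Fin (mp+1), K (j:ℕ) = R * (vv j * ((r (j:ℕ))^2)⁻¹) := by
      intro j; rw [hKj j]; ring
    rw [Finset.sum_congr rfl (fun j _ => this j), ← Finset.mul_sum, hEd, hRQ]
    have hbc : b - c = T - Tb := by
      rw [hb, hT, hTb, ← Fin.sum_univ_eq_sum_range (fun i => 1 / r i) (mp+1)]
      simp [one_div]
      ring
    rw [hbc]
    field_simp
  refine ⟨goal1, goal2, ?_⟩
  intro k hk1 hk2
  rw [← Fin.sum_univ_eq_sum_range (fun j => βp k * K j / (βp k - r j)) (mp+1)]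
  have hβk : βp k ≠ 0 := ne_of_gt (hβpos k hk1 hk2)
  have hpt : ∀ j : Fin (mp+1), βp k * K (j:ℕ) / (βp k - r (j:ℕ))
      = R * (vv j * ((r (j:ℕ))^2)⁻¹) + (βp k)⁻¹ * (R * (vv j * (r (j:ℕ))⁻¹))
        + (βp k)⁻¹ * R * (vv j * (βp k - r (j:ℕ))⁻¹) := by
    intro j
    rw [hKj j]
    have h1 := hrne j (hjle j)
    have h2 := hβrne k hk1 hk2 j (hjle j)
    field_simp
    ring
  rw [Finset.sum_congr rfl (fun j _ => hpt j), Finset.sum_add_distrib, Finset.sum_add_distrib]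
  have e1 : ∑ j : Fin (mp+1), R * (vv j * ((r (j:ℕ))^2)⁻¹) = R * (Qb / Qr * (T - Tb)) := by
    rw [← Finset.mul_sum, hEd]
  have e2 : ∑ j : Fin (mp+1), (βp k)⁻¹ * (R * (vv j * (r (j:ℕ))⁻¹))
      = (βp k)⁻¹ * (R * (Qb / Qr)) := by
    have hh : ∀ j : Fin (mp+1), (βp k)⁻¹ * (R * (vv j * (r (j:ℕ))⁻¹))
        = ((βp k)⁻¹ * R) * (vv j * (r (j:ℕ))⁻¹) := fun j => by ring
    rw [Finset.sum_congr rfl (fun j _ => hh j), ← Finset.mul_sum, hEc]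
    ring
  have e3 : ∑ j : Fin (mp+1), (βp k)⁻¹ * R * (vv j * (βp k - r (j:ℕ))⁻¹) = 0 := by
    rw [← Finset.mul_sum, hEb k hk1 hk2, mul_zero]
  have hbc : b - c = T - Tb := by
    rw [hb, hT, hTb, ← Fin.sum_univ_eq_sum_range (fun i => 1 / r i) (mp+1)]
    simp [one_div]
    ring
  rw [e1, e2, e3, hRQ, hbc, one_div, add_zero]
  field_simp
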